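/- For the power series A_0 with A_0(0)=0 satisfying z(1+A_0)^3=A_0, one has (1+A_0(z))/(1-2A_0(z)) = \sum_{n\ge 0} \binom{3n}{n} z^n. -/

import Mathlib

open PowerSeries

open Nat in
private lemma binom_rec' (n : ℕ) : (2*(n+1)*(2*n+1) : ℚ) * ((3*(n+1)).choose (n+1)) =
    3*(3*n+1)*(3*n+2)*((3*n).choose n) := by
  rw [show (3*(n+1) : ℕ) = 3*n+3 by ring]
  have h1 : ((3*n+3).choose (n+1) : ℚ) = (3*n+3)! / ((n+1)! * (2*n+2)!) := by
    rw [Nat.cast_choose ℚ (by omega : n+1 ≤ 3*n+3), show 3*n+3 - (n+1) = 2*n+2 by omega]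
  have h2 : ((3*n).choose n : ℚ) = (3*n)! / (n ! * (2*n)!) := by
    rw [Nat.cast_choose ℚ (by omega : n ≤ 3*n), show 3*n - n = 2*n by omega]
  have f1 : ((3*n+3)! : ℚ) = (3*n+3)*(3*n+2)*(3*n+1)*(3*n)! := by
    rw [show 3*n+3 = (3*n+2)+1 by omega, Nat.factorial_succ,
        show 3*n+2 = (3*n+1)+1 by omega, Nat.factorial_succ, Nat.factorial_succ]
    push_cast; ring
  have f2 : ((2*n+2)! : ℚ) = (2*n+2)*(2*n+1)*(2*n)! := by
    rw [show 2*n+2 = (2*n+1)+1 by omega, Nat.factorial_succ, Nat.factorial_succ]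
    push_cast; ring
  have f3 : ((n+1)! : ℚ) = (n+1)*(n)! := by rw [Nat.factorial_succ]; push_cast; ring
  rw [h1, h2, f1, f2, f3]
  have hn : ((n)! : ℚ) ≠ 0 := by exact_mod_cast Nat.factorial_ne_zero n
  have hn2 : ((2*n)! : ℚ) ≠ 0 := by exact_mod_cast Nat.factorial_ne_zero (2*n)
  field_simp

private lemma rec_of_ode' (F : ℚ⟦X⟧)
    (hF : X*(4-27*X) * (d⁄dX ℚ (d⁄dX ℚ F)) + (2-54*X) * (d⁄dX ℚ F) = 6*F) (n : ℕ) :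
    (2*(n+1)*(2*n+1) : ℚ) * coeff (n+1) F = 3*(3*n+1)*(3*n+2) * coeff n F := by
  set G := d⁄dX ℚ F with hG
  set H := d⁄dX ℚ G with hH
  have hF' : (C 4)*(X*H) + (C 2)*G = (C 27)*(X*(X*H)) + (C 54)*(X*G) + (C 6)*F := by
    have c4 : (C 4 : ℚ⟦X⟧) = 4 := map_ofNat _ _
    have c2 : (C 2 : ℚ⟦X⟧) = 2 := map_ofNat _ _
    have c27 : (C 27 : ℚ⟦X⟧) = 27 := map_ofNat _ _
    have c54 : (C 54 : ℚ⟦X⟧) = 54 := map_ofNat _ _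
    have c6 : (C 6 : ℚ⟦X⟧) = 6 := map_ofNat _ _
    rw [c4, c2, c27, c54, c6]
    linear_combination hF
  have cG : ∀ k, coeff k G = coeff (k+1) F * (k+1) := fun k => coeff_derivative F k
  have cH : ∀ k, coeff k H = coeff (k+1) G * (k+1) := fun k => coeff_derivative G k
  match n with
  | 0 =>
    have h := congrArg (coeff 0) hF'
    simp only [map_add, coeff_C_mul, coeff_zero_X_mul, cG, cH] at h
    push_cast at h ⊢
    linarith
  | 1 =>
    have h := congrArg (coeff 1) hF'
    simp only [map_add, coeff_C_mul, coeff_succ_X_mul, coeff_zero_X_mul, cG, cH] at h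
    push_cast at h ⊢
    linarith
  | (m+2) =>
    have h := congrArg (coeff (m+2)) hF'
    simp only [map_add, coeff_C_mul, coeff_succ_X_mul, coeff_zero_X_mul, cG, cH] at h
    push_cast at h ⊢
    nlinarith [h]

/-- For the formal power series `A₀` with `A₀(0) = 0` satisfying `z(1+A₀)^3 = A₀`,
one has `(1+A₀(z))/(1-2A₀(z)) = ∑_{n ≥ 0} binom(3n, n) z^n`. -/
theorem stmt_3 (A₀ : PowerSeries ℚ) (h0 : constantCoeff A₀ = 0)
    (hA : X * (1 + A₀) ^ 3 = A₀) :
    (1 + A₀) * (1 - 2 * A₀)⁻¹ = PowerSeries.mk fun n => (Nat.choose (3 * n) n : ℚ) := by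
  have hcu : constantCoeff (1 - 2 * A₀) = 1 := by
    simp [map_sub, h0]
  have hinv : (1 - 2 * A₀)⁻¹ * (1 - 2 * A₀) = 1 :=
    PowerSeries.inv_mul_cancel _ (by rw [hcu]; norm_num)
  set S := (1 + A₀) * (1 - 2 * A₀)⁻¹ with hSdef
  have hS : S * (1 - 2 * A₀) = 1 + A₀ := by
    rw [hSdef, mul_assoc, hinv, mul_one]
  have h2 : (d⁄dX ℚ) (2 : ℚ⟦X⟧) = 0 := by simpa using Derivation.map_natCast (d⁄dX ℚ) 2
  have h3 : (d⁄dX ℚ) (3 : ℚ⟦X⟧) = 0 := by simpa using Derivation.map_natCast (d⁄dX ℚ) 3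
  set DA := d⁄dX ℚ A₀ with hDA
  set DDA := d⁄dX ℚ DA with hDDA
  set DS := d⁄dX ℚ S with hDS
  set DDS := d⁄dX ℚ DS with hDDS
  have hE2 : DA * (1 - 2*A₀) = (1+A₀)^4 := by
    have hD := congrArg (d⁄dX ℚ) hA
    simp only [Derivation.leibniz, Derivation.leibniz_pow, derivative_X, smul_eq_mul, mul_one,
      one_mul, map_add, Derivation.map_one_eq_zero, add_zero, zero_add, ← hDA] at hD
    linear_combination 3*DA*hA - (1+A₀)*hD
  have hE3 : DDA * (1 - 2*A₀) = 2*DA^2 + 4*DA*(1+A₀)^3 := by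
    have hD := congrArg (d⁄dX ℚ) hE2
    simp only [Derivation.leibniz, Derivation.leibniz_pow, derivative_X, smul_eq_mul, mul_one,
      one_mul, map_add, map_sub, Derivation.map_one_eq_zero, add_zero, zero_add, h2,
      mul_zero, zero_mul, sub_zero, zero_sub, ← hDA, ← hDDA] at hD
    linear_combination hD
  have hS1 : DS * (1 - 2*A₀)^2 = 3 * DA := by
    have hD := congrArg (d⁄dX ℚ) hS
    simp only [Derivation.leibniz, Derivation.leibniz_pow, derivative_X, smul_eq_mul, mul_one,
      one_mul, map_add, map_sub, Derivation.map_one_eq_zero, add_zero, zero_add, h2,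
      mul_zero, zero_mul, sub_zero, zero_sub, ← hDA, ← hDS] at hD
    linear_combination (1-2*A₀)*hD + 2*DA*hS
  have hS2 : DDS * (1 - 2*A₀)^3 = 18*DA^2 + 12*DA*(1+A₀)^3 := by
    have hD := congrArg (d⁄dX ℚ) hS1
    simp only [Derivation.leibniz, Derivation.leibniz_pow, derivative_X, smul_eq_mul, mul_one,
      one_mul, map_add, map_sub, Derivation.map_one_eq_zero, add_zero, zero_add, h2, h3,
      mul_zero, zero_mul, sub_zero, zero_sub, ← hDA, ← hDDA, ← hDS, ← hDDS] at hD
    linear_combination (1-2*A₀)*hD + 4*DA*hS1 + 3*hE3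
  have hMain : X*(4-27*X)*(18*DA^2+12*DA*(1+A₀)^3)*(1-2*A₀)^2
      + (2-54*X)*(3*DA)*(1-2*A₀)^3 = 6*(1+A₀)*(1-2*A₀)^4 := by
    linear_combination
      (6 - 24*A₀ + 24*A₀^2
        + X*(-42 + 72*DA + 984*A₀ - 144*A₀*DA - 360*A₀^2 + 48*A₀^3 - 24*A₀^4)
        + X^2*(-810 - 486*DA - 2268*A₀ + 972*A₀*DA - 1944*A₀^2 - 324*A₀^3 + 162*A₀^4)) * hE2
      + (-42 + 132*A₀ - 24*A₀^2 - 150*A₀^3 + 24*A₀^4 - 24*A₀^5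
        + X*(-810 - 3078*A₀ - 4212*A₀^2 - 2268*A₀^3 - 162*A₀^4 + 162*A₀^5)) * hA
  have hne : (1 - 2*A₀)^5 ≠ (0:ℚ⟦X⟧) := by
    apply pow_ne_zero
    intro h
    rw [h] at hcu
    simp at hcu
  have hODE : X*(4-27*X)*DDS + (2-54*X)*DS = 6*S := by
    apply mul_right_cancel₀ hne
    linear_combination (X*(4-27*X)*(1-2*A₀)^2)*hS2 + ((2-54*X)*(1-2*A₀)^3)*hS1
      + hMain - (6*(1-2*A₀)^4)*hS
  have hrec := rec_of_ode' S hODE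
  have hs0 : coeff 0 S = 1 := by
    rw [hSdef]
    rw [coeff_zero_eq_constantCoeff, map_mul, constantCoeff_inv, hcu]
    simp [h0]
  have key : ∀ n, coeff n S = ((3*n).choose n : ℚ) := by
    intro n
    induction n with
    | zero => simpa using hs0
    | succ k ih =>
      have h1 := hrec k
      rw [ih] at h1
      have hne' : (2*(k+1)*(2*k+1) : ℚ) ≠ 0 := by positivity
      exact mul_left_cancel₀ hne' (h1.trans (binom_rec' k).symm)
  ext n
  rw [coeff_mk]
  exact key n
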